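/- Assume μ₀ ∈ 𝒦 (compactly supported, absolutely continuous on ℝᵈ with density bounded above and below on its support, boundary of support null) and μ_θ = (x+θ)♯μ₀. For any slicing schedule 𝒮 as in the no-collision existence theorem, the slicing partition sets satisfy Ω^{μ_θ}_b = Ω^{μ₀}_b + θ for every binary index b, hence ℓ^{μ_θ}(x) = ℓ^{μ₀}(x−θ) for all x, and the no-collision map is t_{μ₀}^{μ_θ}(x) = x + θ for μ₀-a.e. x; consequently W_{𝒮,p}(μ_θ, μ_{θ'}) = |θ − θ'| for all p ≥ 1. -/

import Mathlib

open MeasureTheory Real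
open scoped ENNReal NNReal RealInnerProductSpace

variable {d : ℕ}

/-- A slicing schedule, assigning to each partition cell (indexed by the binary word of
splitting decisions, most recent decision first) a unit direction along which it is
bisected. -/
structure Slicing (d : ℕ) where
  dir : List Bool → EuclideanSpace ℝ (Fin d)
  unit : ∀ b, ‖dir b‖ = 1

/-- The partition cells determined by a slicing schedule `S` and heights `h`:
`Ω_[] = ℝᵈ` and the cell `Ω_b` is bisected by the hyperplane `{x · s_b = h_b}`. -/
noncomputable def cell (S : Slicing d) (h : List Bool → ℝ) :
    List Bool → Set (EuclideanSpace ℝ (Fin d))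
  | [] => Set.univ
  | (i :: b) => cell S h b ∩ {x | if i then h b < ⟪S.dir b, x⟫ else ⟪S.dir b, x⟫ ≤ h b}

/-- `h` realizes median (equal-mass) bisections of every cell for `μ`. -/
def IsMedianHeights (S : Slicing d) (μ : Measure (EuclideanSpace ℝ (Fin d)))
    (h : List Bool → ℝ) : Prop :=
  ∀ b, μ (cell S h (false :: b)) = μ (cell S h (true :: b))

/-- The ternary label `Σ_α i_α/3^α` of a cell. -/
noncomputable def label : List Bool → ℝ
  | [] => 0
  | (i :: b) => label b + (if i then 1 else 0) / 3 ^ (b.length + 1)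

open Classical in
/-- The address (index of the nested cell) of a point at depth `k`. -/
noncomputable def addr (S : Slicing d) (h : List Bool → ℝ)
    (x : EuclideanSpace ℝ (Fin d)) : ℕ → List Bool
  | 0 => []
  | (k + 1) =>
    (if h (addr S h x k) < ⟪S.dir (addr S h x k), x⟫ then true else false) :: addr S h x k

/-- The limiting labeling function `ℓ^μ`. -/
noncomputable def ell (S : Slicing d) (h : List Bool → ℝ)
    (x : EuclideanSpace ℝ (Fin d)) : ℝ :=
  ⨆ k, label (addr S h x k)

/-- `t` is a no-collision map from `(μ, hμ)` to `(ν, hν)`: it pushes `μ` forward to `ν`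
and maps each partition cell of `μ` into the corresponding cell of `ν` (μ-a.e.). -/
def IsNoCollisionMap (S : Slicing d) (hμ hν : List Bool → ℝ)
    (μ ν : Measure (EuclideanSpace ℝ (Fin d)))
    (t : EuclideanSpace ℝ (Fin d) → EuclideanSpace ℝ (Fin d)) : Prop :=
  Measurable t ∧ μ.map t = ν ∧ ∀ b, ∀ᵐ x ∂μ, x ∈ cell S hμ b → t x ∈ cell S hν b

/-- The class `𝒦`: compactly supported absolutely continuous probability measures whose
density is bounded above and below on the support, with null boundary of support. -/
def MemK (μ : Measure (EuclideanSpace ℝ (Fin d))) : Prop :=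
  IsProbabilityMeasure μ ∧ μ ≪ volume ∧
  ∃ K : Set (EuclideanSpace ℝ (Fin d)), IsCompact K ∧ μ Kᶜ = 0 ∧ μ (frontier K) = 0 ∧
    ∃ c C : ℝ, 0 < c ∧
      ∀ᵐ x ∂(volume.restrict K),
        ENNReal.ofReal c ≤ μ.rnDeriv volume x ∧ μ.rnDeriv volume x ≤ ENNReal.ofReal C

/-- The finite initial branches of an infinite splitting sequence. -/
def branch (σ : ℕ → Bool) : ℕ → List Bool
  | 0 => []
  | (k + 1) => σ k :: branch σ k

/-- A schedule as in the no-collision existence theorem: all directions come from a fixed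
basis, and each direction occurs infinitely often along every infinite branch. -/
def GoodSchedule (S : Slicing d) : Prop :=
  ∃ v : Module.Basis (Fin d) ℝ (EuclideanSpace ℝ (Fin d)),
    (∀ b, ∃ (i : Fin d) (c : ℝ), S.dir b = c • v i) ∧
    ∀ (σ : ℕ → Bool) (i : Fin d),
      {k : ℕ | ∃ c : ℝ, S.dir (branch σ k) = c • v i}.Infinite

/- ===================  Auxiliary development  =================== -/

open Filter Topology

namespace NoColl

variable (S : Slicing d) (h : List Bool → ℝ)

lemma cell_cons (i : Bool) (b : List Bool) :
    cell S h (i :: b) =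
      cell S h b ∩ {x | if i then h b < ⟪S.dir b, x⟫ else ⟪S.dir b, x⟫ ≤ h b} := rfl

lemma addr_succ (x : EuclideanSpace ℝ (Fin d)) (k : ℕ) :
    addr S h x (k + 1) =
      (if h (addr S h x k) < ⟪S.dir (addr S h x k), x⟫ then true else false)
        :: addr S h x k := rfl

lemma measurable_inner_const (c : EuclideanSpace ℝ (Fin d)) :
    Measurable fun x : EuclideanSpace ℝ (Fin d) => ⟪c, x⟫ :=
  (continuous_const.inner continuous_id).measurable

lemma measurableSet_cell (b : List Bool) : MeasurableSet (cell S h b) := by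
  induction b with
  | nil => exact MeasurableSet.univ
  | cons i b ih =>
    rw [cell_cons]
    refine ih.inter ?_
    cases i
    · simpa using measurableSet_le (measurable_inner_const (S.dir b)) measurable_const
    · simpa using measurableSet_lt measurable_const (measurable_inner_const (S.dir b))

lemma addr_length (x : EuclideanSpace ℝ (Fin d)) (k : ℕ) : (addr S h x k).length = k := by
  induction k with
  | zero => rfl
  | succ k ih => rw [addr_succ]; simp [ih]

lemma mem_cell_addr (x : EuclideanSpace ℝ (Fin d)) (k : ℕ) :
    x ∈ cell S h (addr S h x k) := by
  induction k with
  | zero => exact Set.mem_univ x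
  | succ k ih =>
    rw [addr_succ, cell_cons]
    refine ⟨ih, ?_⟩
    by_cases hc : h (addr S h x k) < ⟪S.dir (addr S h x k), x⟫
    · simp [hc]
    · simp [hc, le_of_not_gt hc]

lemma eq_addr_of_mem {k : ℕ} :
    ∀ (b : List Bool) (x : EuclideanSpace ℝ (Fin d)), b.length = k → x ∈ cell S h b →
      addr S h x k = b := by
  induction k with
  | zero => intro b x hb _; simp only [List.length_eq_zero_iff] at hb; simp [hb, addr]
  | succ k ih =>
    intro b x hb hx
    cases b with
    | nil => simp at hb
    | cons i b =>
      simp only [List.length_cons, Nat.add_right_cancel_iff] at hb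
      rw [cell_cons] at hx
      have hb' : addr S h x k = b := ih b x hb hx.1
      rw [addr_succ, hb']
      have hcond : (if i then h b < ⟪S.dir b, x⟫ else ⟪S.dir b, x⟫ ≤ h b) := hx.2
      cases i with
      | false =>
        rw [if_neg (Bool.false_ne_true)] at hcond
        rw [if_neg (not_lt.2 hcond)]
      | true =>
        rw [if_pos rfl] at hcond
        rw [if_pos hcond]

lemma addr_eq_iff {k : ℕ} {b : List Bool} (hb : b.length = k)
    (x : EuclideanSpace ℝ (Fin d)) :
    addr S h x k = b ↔ x ∈ cell S h b :=
  ⟨fun e => e ▸ mem_cell_addr S h x k, fun m => eq_addr_of_mem S h b x hb m⟩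

lemma mem_cell_true (b : List Bool) (x : EuclideanSpace ℝ (Fin d)) :
    x ∈ cell S h (true :: b) ↔ x ∈ cell S h b ∧ h b < ⟪S.dir b, x⟫ := Iff.rfl

lemma mem_cell_false (b : List Bool) (x : EuclideanSpace ℝ (Fin d)) :
    x ∈ cell S h (false :: b) ↔ x ∈ cell S h b ∧ ⟪S.dir b, x⟫ ≤ h b := Iff.rfl

lemma cell_union (b : List Bool) :
    cell S h (false :: b) ∪ cell S h (true :: b) = cell S h b := by
  ext x
  rw [Set.mem_union, mem_cell_false, mem_cell_true]
  constructor
  · rintro (⟨h1, -⟩ | ⟨h1, -⟩) <;> exact h1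
  · intro h1
    by_cases hc : h b < ⟪S.dir b, x⟫
    · exact Or.inr ⟨h1, hc⟩
    · exact Or.inl ⟨h1, not_lt.1 hc⟩

lemma cell_disjoint (b : List Bool) :
    Disjoint (cell S h (false :: b)) (cell S h (true :: b)) := by
  rw [Set.disjoint_left]
  intro x hx1 hx2
  exact absurd ((mem_cell_true S h b x).1 hx2).2 (not_lt.2 ((mem_cell_false S h b x).1 hx1).2)

lemma measure_cell (μ : Measure (EuclideanSpace ℝ (Fin d))) [IsProbabilityMeasure μ]
    (hmed : IsMedianHeights S μ h) (b : List Bool) :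
    μ (cell S h b) = 2⁻¹ ^ b.length := by
  induction b with
  | nil => simp [cell]
  | cons i b ih =>
    have hu : μ (cell S h (false :: b)) + μ (cell S h (true :: b)) = μ (cell S h b) := by
      rw [← measure_union (cell_disjoint S h b) (measurableSet_cell S h _), cell_union]
    rw [hmed b, ih] at hu
    have h2 : μ (cell S h (true :: b)) = 2⁻¹ ^ (b.length + 1) := by
      have : (2 : ℝ≥0∞) * μ (cell S h (true :: b)) = 2⁻¹ ^ b.length := by
        rw [two_mul]; exact hu
      calc μ (cell S h (true :: b)) = 2⁻¹ * (2 * μ (cell S h (true :: b))) := by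
            rw [← mul_assoc, ENNReal.inv_mul_cancel (by norm_num) (by norm_num), one_mul]
        _ = 2⁻¹ ^ (b.length + 1) := by rw [this, pow_succ, mul_comm]
    cases i
    · rw [hmed b]; simpa using h2
    · simpa using h2


lemma addr_preimage_singleton (k : ℕ) (b : List Bool) :
    (fun x : EuclideanSpace ℝ (Fin d) => addr S h x k) ⁻¹' {b} =
      if b.length = k then cell S h b else ∅ := by
  split_ifs with hb
  · ext x
    simp only [Set.mem_preimage, Set.mem_singleton_iff]
    exact addr_eq_iff S h hb x
  · ext x
    simp only [Set.mem_preimage, Set.mem_singleton_iff, Set.mem_empty_iff_false, iff_false]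
    intro he
    exact hb (he ▸ addr_length S h x k)

lemma measurableSet_addr_preimage (k : ℕ) (T : Set (List Bool)) :
    MeasurableSet ((fun x : EuclideanSpace ℝ (Fin d) => addr S h x k) ⁻¹' T) := by
  have : (fun x : EuclideanSpace ℝ (Fin d) => addr S h x k) ⁻¹' T =
      ⋃ b ∈ T, (fun x : EuclideanSpace ℝ (Fin d) => addr S h x k) ⁻¹' {b} := by
    ext x; simp
  rw [this]
  refine MeasurableSet.biUnion (Set.to_countable T) fun b _ => ?_
  rw [addr_preimage_singleton]
  split_ifs
  · exact measurableSet_cell S h b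
  · exact MeasurableSet.empty

/-- The filtration generated by the nested partitions into cells. -/
noncomputable def filt :
    Filtration ℕ (inferInstance : MeasurableSpace (EuclideanSpace ℝ (Fin d))) where
  seq k := MeasurableSpace.comap (fun x => addr S h x k) ⊤
  mono' := by
    refine monotone_nat_of_le_succ fun k => ?_
    have hcomp : (fun x : EuclideanSpace ℝ (Fin d) => addr S h x k)
        = List.tail ∘ (fun x => addr S h x (k + 1)) := by
      funext x; simp only [Function.comp_apply, addr_succ, List.tail_cons]
    rw [hcomp, ← MeasurableSpace.comap_comp]
    exact MeasurableSpace.comap_mono le_top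
  le' := by
    intro k s hs
    obtain ⟨T, -, rfl⟩ := hs
    exact measurableSet_addr_preimage S h k T

lemma measurableSet_filt (k : ℕ) (T : Set (List Bool)) :
    MeasurableSet[filt S h k] ((fun x : EuclideanSpace ℝ (Fin d) => addr S h x k) ⁻¹' T) :=
  ⟨T, trivial, rfl⟩

/-- The set of points at which the bisection at depth `k` keeps all of `A` (within the cell). -/
def keep (A : Set (EuclideanSpace ℝ (Fin d))) (k : ℕ) : Set (EuclideanSpace ℝ (Fin d)) :=
  {x | A ∩ cell S h (addr S h x k) ⊆ cell S h (addr S h x (k + 1))}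

lemma keep_eq_preimage (A : Set (EuclideanSpace ℝ (Fin d))) (k : ℕ) :
    keep S h A k = (fun x : EuclideanSpace ℝ (Fin d) => addr S h x (k + 1)) ⁻¹'
      {l : List Bool | A ∩ cell S h l.tail ⊆ cell S h l} := by
  ext x
  simp only [keep, Set.mem_setOf_eq, Set.mem_preimage]
  rw [show (addr S h x (k + 1)).tail = addr S h x k from by rw [addr_succ]; rfl]

lemma measurableSet_keep_filt (A : Set (EuclideanSpace ℝ (Fin d))) (k : ℕ) :
    MeasurableSet[filt S h (k + 1)] (keep S h A k) := by
  rw [keep_eq_preimage]; exact measurableSet_filt S h (k + 1) _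

lemma measurableSet_keep (A : Set (EuclideanSpace ℝ (Fin d))) (k : ℕ) :
    MeasurableSet (keep S h A k) :=
  (filt S h).le (k + 1) _ (measurableSet_keep_filt S h A k)

/-- The event that infinitely many bisections along the branch of `x` keep all of `A`. -/
def keepEvent (A : Set (EuclideanSpace ℝ (Fin d))) : Set (EuclideanSpace ℝ (Fin d)) :=
  {x | {k | x ∈ keep S h A k}.Infinite}

lemma keepEvent_eq (A : Set (EuclideanSpace ℝ (Fin d))) :
    keepEvent S h A = ⋂ N, ⋃ k, ⋃ (_ : N ≤ k), keep S h A k := by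
  ext x
  simp only [keepEvent, Set.mem_setOf_eq, Set.mem_iInter, Set.mem_iUnion]
  constructor
  · intro hx N
    obtain ⟨k, hk, hNk⟩ := hx.exists_gt N
    exact ⟨k, hNk.le, hk⟩
  · intro hx
    refine Set.infinite_of_forall_exists_gt fun a => ?_
    obtain ⟨k, hak, hk⟩ := hx (a + 1)
    exact ⟨k, hk, by omega⟩

lemma measurableSet_keepEvent (A : Set (EuclideanSpace ℝ (Fin d))) :
    MeasurableSet (keepEvent S h A) := by
  rw [keepEvent_eq]
  exact MeasurableSet.iInter fun N => MeasurableSet.iUnion fun k =>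
    MeasurableSet.iUnion fun _ => measurableSet_keep S h A k

lemma measurableSet_keepEvent_iSup (A : Set (EuclideanSpace ℝ (Fin d))) :
    MeasurableSet[⨆ k, (filt S h k : MeasurableSpace (EuclideanSpace ℝ (Fin d)))]
      (keepEvent S h A) := by
  rw [keepEvent_eq]
  refine MeasurableSet.iInter fun N => MeasurableSet.iUnion fun k =>
    MeasurableSet.iUnion fun _ => ?_
  exact (le_iSup (fun n => (filt S h n : MeasurableSpace (EuclideanSpace ℝ (Fin d)))) (k + 1))
    _ (measurableSet_keep_filt S h A k)

lemma measurable_addrFun (k : ℕ) (g : List Bool → ℝ) :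
    Measurable fun x : EuclideanSpace ℝ (Fin d) => g (addr S h x k) := fun t _ =>
  measurableSet_addr_preimage S h k (g ⁻¹' t)

lemma stronglyMeasurable_addrFun_filt (k : ℕ) (g : List Bool → ℝ) :
    StronglyMeasurable[filt S h k] fun x : EuclideanSpace ℝ (Fin d) => g (addr S h x k) := by
  refine Measurable.stronglyMeasurable fun t _ => ?_
  exact measurableSet_filt S h k (g ⁻¹' t)

lemma tendsto_lim_eq_zero {u : ℕ → ℝ} {L : ℝ} (hu : Filter.Tendsto u Filter.atTop (nhds L))
    (hd : {k | u (k + 1) = 2 * u k}.Infinite) : L = 0 := by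
  by_contra hL
  have h1 : Filter.Tendsto (fun k => u (k + 1) - 2 * u k) Filter.atTop (nhds (L - 2 * L)) :=
    (hu.comp (Filter.tendsto_add_atTop_nat 1)).sub (hu.const_mul 2)
  have h2 : L - 2 * L ≠ 0 := by intro hc; apply hL; linarith
  have h3 : ∀ᶠ k in Filter.atTop, u (k + 1) - 2 * u k ≠ 0 := h1.eventually_ne h2
  have h4 : ∃ᶠ k in Filter.atTop, u (k + 1) = 2 * u k := by
    rw [Filter.frequently_atTop]
    intro N
    obtain ⟨b, hb, hNb⟩ := hd.exists_gt N
    exact ⟨b, hNb.le, hb⟩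
  obtain ⟨k, hk1, hk2⟩ := (h4.and_eventually h3).exists
  exact hk2 (by rw [hk1]; ring)

/-- Key martingale lemma: almost no point of `A` has infinitely many bisections along its
branch that keep all of `A`. -/
lemma measure_keepEvent_inter (μ : Measure (EuclideanSpace ℝ (Fin d)))
    [IsProbabilityMeasure μ] (hmed : IsMedianHeights S μ h)
    (A : Set (EuclideanSpace ℝ (Fin d))) (hA : MeasurableSet A) :
    μ (keepEvent S h A ∩ A) = 0 := by
  classical
  set ℱ := filt S h with hFdef
  have hmsup : (⨆ k, (ℱ k : MeasurableSpace (EuclideanSpace ℝ (Fin d)))) ≤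
      (inferInstance : MeasurableSpace (EuclideanSpace ℝ (Fin d))) :=
    iSup_le fun k => ℱ.le k
  set f : EuclideanSpace ℝ (Fin d) → ℝ := A.indicator fun _ => (1 : ℝ) with hfdef
  have hf : Integrable f μ := (integrable_const 1).indicator hA
  set a : ℕ → EuclideanSpace ℝ (Fin d) → ℝ :=
    fun k x => (μ (A ∩ cell S h (addr S h x k))).toReal * 2 ^ k with hadef
  have hpow : ∀ k : ℕ, ((2 : ℝ≥0∞)⁻¹ ^ k).toReal = (2 : ℝ)⁻¹ ^ k := by intro k; simp
  have h2k : ∀ k : ℕ, ((2 : ℝ)⁻¹) ^ k * 2 ^ k = 1 := by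
    intro k; rw [← mul_pow]; norm_num
  have hcellk : ∀ (k : ℕ) (x : EuclideanSpace ℝ (Fin d)),
      μ (cell S h (addr S h x k)) = 2⁻¹ ^ k := by
    intro k x
    rw [measure_cell S h μ hmed, addr_length]
  have haint : ∀ k, Integrable (a k) μ := by
    intro k
    refine Integrable.mono' (integrable_const (1 : ℝ))
      ((measurable_addrFun S h k
        (fun b => (μ (A ∩ cell S h b)).toReal * 2 ^ k)).aestronglyMeasurable) ?_
    refine Filter.Eventually.of_forall fun x => ?_
    rw [Real.norm_eq_abs, abs_of_nonneg (by positivity)]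
    have hle : μ (A ∩ cell S h (addr S h x k)) ≤ 2⁻¹ ^ k := by
      rw [← hcellk k x]
      exact measure_mono Set.inter_subset_right
    calc (μ (A ∩ cell S h (addr S h x k))).toReal * 2 ^ k
        ≤ ((2 : ℝ≥0∞)⁻¹ ^ k).toReal * 2 ^ k :=
          mul_le_mul_of_nonneg_right
            (ENNReal.toReal_mono (ENNReal.pow_ne_top (by simp)) hle) (by positivity)
      _ = 1 := by rw [hpow, h2k]
  -- a k is a version of the conditional expectation of f
  have hacond : ∀ k, a k =ᵐ[μ] μ[f | ℱ k] := by
    intro k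
    refine ae_eq_condExp_of_forall_setIntegral_eq (ℱ.le k) hf
      (fun s _ _ => (haint k).integrableOn) ?_ ?_
    · intro s hs _
      obtain ⟨T, -, rfl⟩ := hs
      have hdecomp : (fun x : EuclideanSpace ℝ (Fin d) => addr S h x k) ⁻¹' T =
          ⋃ b : T, (fun x : EuclideanSpace ℝ (Fin d) => addr S h x k) ⁻¹' {(b : List Bool)} := by
        ext x; simp
      have hmeas : ∀ b : T,
          MeasurableSet ((fun x : EuclideanSpace ℝ (Fin d) => addr S h x k) ⁻¹' {(b : List Bool)}) :=
        fun b => measurableSet_addr_preimage S h k _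
      have hdisj : Pairwise (Function.onFun Disjoint
          (fun b : T => (fun x : EuclideanSpace ℝ (Fin d) => addr S h x k) ⁻¹' {(b : List Bool)})) := by
        intro b b' hbb'
        refine Set.disjoint_left.2 fun x hx hx' => ?_
        simp only [Set.mem_preimage, Set.mem_singleton_iff] at hx hx'
        exact hbb' (Subtype.ext (hx ▸ hx'))
      rw [hdecomp, integral_iUnion hmeas hdisj ((haint k).integrableOn),
        integral_iUnion hmeas hdisj (hf.integrableOn)]
      refine tsum_congr fun b => ?_
      rw [addr_preimage_singleton]
      split_ifs with hb
      · have h1 : ∫ x in cell S h (b : List Bool), a k x ∂μ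
            = (μ (A ∩ cell S h (b : List Bool))).toReal := by
          rw [setIntegral_congr_fun (measurableSet_cell S h (b : List Bool))
            (g := fun _ => (μ (A ∩ cell S h (b : List Bool))).toReal * 2 ^ k)
            (fun x hx => by
              simp only [hadef]
              rw [eq_addr_of_mem S h (b : List Bool) x hb hx]),
            setIntegral_const, measureReal_def, measure_cell S h μ hmed, hb, smul_eq_mul, hpow,
            mul_comm ((2 : ℝ)⁻¹ ^ k), mul_assoc, ← mul_pow]
          norm_num
        have h2 : ∫ x in cell S h (b : List Bool), f x ∂μ
            = (μ (A ∩ cell S h (b : List Bool))).toReal := by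
          rw [hfdef, setIntegral_indicator hA, setIntegral_const, smul_eq_mul, mul_one, measureReal_def,
            Set.inter_comm]
        rw [h1, h2]
      · simp
    · exact (stronglyMeasurable_addrFun_filt S h k
        (fun b => (μ (A ∩ cell S h b)).toReal * 2 ^ k)).aestronglyMeasurable
  -- Lévy's upward theorem
  set g : EuclideanSpace ℝ (Fin d) → ℝ :=
    μ[f | ⨆ k, (ℱ k : MeasurableSpace (EuclideanSpace ℝ (Fin d)))] with hgdef
  have hglevy : ∀ᵐ x ∂μ, Filter.Tendsto (fun n => (μ[g | ℱ n]) x) Filter.atTop (nhds (g x)) :=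
    Integrable.tendsto_ae_condExp integrable_condExp stronglyMeasurable_condExp
  have htower : ∀ n, μ[g | ℱ n] =ᵐ[μ] μ[f | ℱ n] := fun n =>
    condExp_condExp_of_le (le_iSup (fun k => (ℱ k : MeasurableSpace (EuclideanSpace ℝ (Fin d)))) n)
      hmsup
  have haconv : ∀ᵐ x ∂μ, Filter.Tendsto (fun n => a n x) Filter.atTop (nhds (g x)) := by
    have hall : ∀ᵐ x ∂μ, ∀ n, a n x = (μ[g | ℱ n]) x := by
      rw [MeasureTheory.ae_all_iff]
      intro n
      exact (hacond n).trans (htower n).symm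
    filter_upwards [hglevy, hall] with x hx1 hx2
    exact hx1.congr fun n => (hx2 n).symm
  -- on the event, the limit is zero
  have hgzero : ∀ᵐ x ∂μ, x ∈ keepEvent S h A → g x = 0 := by
    filter_upwards [haconv] with x hx hxE
    refine tendsto_lim_eq_zero hx (hxE.mono ?_)
    intro k hk
    have hsub : cell S h (addr S h x (k + 1)) ⊆ cell S h (addr S h x k) := by
      rw [addr_succ, cell_cons]; exact Set.inter_subset_left
    have hAeq : A ∩ cell S h (addr S h x (k + 1)) = A ∩ cell S h (addr S h x k) := by
      apply subset_antisymm
      · exact Set.inter_subset_inter_right A hsub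
      · intro z hz
        exact ⟨hz.1, hk hz⟩
    simp only [Set.mem_setOf_eq, hadef]
    rw [hAeq, pow_succ]
    ring
  -- conclude
  have hEmsup : MeasurableSet[⨆ k, (ℱ k : MeasurableSpace (EuclideanSpace ℝ (Fin d)))]
      (keepEvent S h A) := measurableSet_keepEvent_iSup S h A
  have hEmeas : MeasurableSet (keepEvent S h A) := measurableSet_keepEvent S h A
  have hint1 : ∫ x in keepEvent S h A, g x ∂μ = 0 := by
    rw [setIntegral_congr_ae hEmeas (by filter_upwards [hgzero] with x hx hxE; exact hx hxE :
      ∀ᵐ x ∂μ, x ∈ keepEvent S h A → g x = (fun _ => (0 : ℝ)) x)]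
    simp
  have hint2 : ∫ x in keepEvent S h A, f x ∂μ = (μ (keepEvent S h A ∩ A)).toReal := by
    rw [hfdef, setIntegral_indicator hA, setIntegral_const, smul_eq_mul, mul_one, measureReal_def]
  have hint3 : ∫ x in keepEvent S h A, g x ∂μ = ∫ x in keepEvent S h A, f x ∂μ :=
    setIntegral_condExp hmsup hf hEmsup
  have : (μ (keepEvent S h A ∩ A)).toReal = 0 := by rw [← hint2, ← hint3, hint1]
  exact (ENNReal.toReal_eq_zero_iff _).1 this |>.resolve_right (measure_ne_top μ _)

/-- Any measure-preserving map fixing all cells (a.e.) is a.e. the identity. -/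
lemma map_ae_id {S : Slicing d} (hS : GoodSchedule S) {h : List Bool → ℝ}
    (μ : Measure (EuclideanSpace ℝ (Fin d))) [IsProbabilityMeasure μ]
    (hmed : IsMedianHeights S μ h)
    (u : EuclideanSpace ℝ (Fin d) → EuclideanSpace ℝ (Fin d))
    (hum : Measurable u) (hmap : μ.map u = μ)
    (hcell : ∀ b, ∀ᵐ x ∂μ, x ∈ cell S h b → u x ∈ cell S h b) :
    ∀ᵐ x ∂μ, u x = x := by
  classical
  obtain ⟨v, hrep, hinf⟩ := hS
  set A : Fin d → ℚ → Set (EuclideanSpace ℝ (Fin d)) :=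
    fun i q => {z | ⟪v i, z⟫ ≤ (q : ℝ)} with hAdef
  set B : Fin d → ℚ → Set (EuclideanSpace ℝ (Fin d)) :=
    fun i q => {z | (q : ℝ) ≤ ⟪v i, z⟫} with hBdef
  have hAmeas : ∀ i q, MeasurableSet (A i q) := fun i q =>
    measurableSet_le (measurable_inner_const (v i)) measurable_const
  have hBmeas : ∀ i q, MeasurableSet (B i q) := fun i q =>
    measurableSet_le measurable_const (measurable_inner_const (v i))
  have hNU : ∀ i q, μ (keepEvent S h (A i q) ∩ A i q) = 0 := fun i q =>
    measure_keepEvent_inter S h μ hmed _ (hAmeas i q)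
  have hNL : ∀ i q, μ (keepEvent S h (B i q) ∩ B i q) = 0 := fun i q =>
    measure_keepEvent_inter S h μ hmed _ (hBmeas i q)
  have hpreU : ∀ i q, μ (u ⁻¹' (keepEvent S h (A i q) ∩ A i q)) = 0 := by
    intro i q
    rw [← Measure.map_apply hum ((measurableSet_keepEvent S h _).inter (hAmeas i q)), hmap]
    exact hNU i q
  have hpreL : ∀ i q, μ (u ⁻¹' (keepEvent S h (B i q) ∩ B i q)) = 0 := by
    intro i q
    rw [← Measure.map_apply hum ((measurableSet_keepEvent S h _).inter (hBmeas i q)), hmap]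
    exact hNL i q
  have haddr : ∀ᵐ x ∂μ, ∀ k, addr S h (u x) k = addr S h x k := by
    have hc : ∀ᵐ x ∂μ, ∀ b : List Bool, x ∈ cell S h b → u x ∈ cell S h b :=
      (MeasureTheory.ae_all_iff).2 hcell
    filter_upwards [hc] with x hx k
    exact eq_addr_of_mem S h _ (u x) (addr_length S h x k) (hx _ (mem_cell_addr S h x k))
  have hxgood : ∀ᵐ x ∂μ, ∀ (i : Fin d) (q : ℚ),
      x ∉ keepEvent S h (A i q) ∩ A i q ∧ x ∉ keepEvent S h (B i q) ∩ B i q := by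
    rw [MeasureTheory.ae_all_iff]
    intro i
    rw [MeasureTheory.ae_all_iff]
    intro q
    filter_upwards [measure_eq_zero_iff_ae_notMem.1 (hNU i q), measure_eq_zero_iff_ae_notMem.1 (hNL i q)]
      with x h1 h2
    exact ⟨h1, h2⟩
  have hugood : ∀ᵐ x ∂μ, ∀ (i : Fin d) (q : ℚ),
      u x ∉ keepEvent S h (A i q) ∩ A i q ∧ u x ∉ keepEvent S h (B i q) ∩ B i q := by
    rw [MeasureTheory.ae_all_iff]
    intro i
    rw [MeasureTheory.ae_all_iff]
    intro q
    filter_upwards [measure_eq_zero_iff_ae_notMem.1 (hpreU i q),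
      measure_eq_zero_iff_ae_notMem.1 (hpreL i q)] with x h1 h2
    exact ⟨h1, h2⟩
  filter_upwards [haddr, hxgood, hugood] with x hax hgx hgu
  -- the coordinates of `u x` and `x` agree
  have hcoord : ∀ i : Fin d, ⟪v i, u x⟫ = ⟪v i, x⟫ := by
    intro i
    by_contra hne
    -- both points lie in every cell along the branch of x
    have hmemx : ∀ k, x ∈ cell S h (addr S h x k) := fun k => mem_cell_addr S h x k
    have hmemu : ∀ k, u x ∈ cell S h (addr S h x k) := fun k => by
      rw [← hax k]; exact mem_cell_addr S h (u x) k
    -- keepEvent membership only depends on the address sequence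
    have hkeep_eq : ∀ (C : Set (EuclideanSpace ℝ (Fin d))),
        u x ∈ keepEvent S h C ↔ x ∈ keepEvent S h C := by
      intro C
      simp only [keepEvent, keep, Set.mem_setOf_eq, hax]
    -- main case analysis
    have key : ∀ y z : EuclideanSpace ℝ (Fin d),
        (∀ k, y ∈ cell S h (addr S h x k)) → (∀ k, z ∈ cell S h (addr S h x k)) →
        (y = x ∨ y = u x) → (z = x ∨ z = u x) →
        ⟪v i, y⟫ < ⟪v i, z⟫ → False := by
      intro y z hy hz hyor hzor hyz
      obtain ⟨q, hq1, hq2⟩ := exists_rat_btwn hyz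
      -- every i-cut keeps A i q or keeps B i q
      have hsplit : {k | ∃ c : ℝ, S.dir (addr S h x k) = c • v i} ⊆
          {k | x ∈ keep S h (A i q) k} ∪ {k | x ∈ keep S h (B i q) k} := by
        rintro k ⟨c, hc⟩
        have hc0 : c ≠ 0 := by
          rintro rfl
          have hun := S.unit (addr S h x k)
          rw [hc] at hun
          simp at hun
        set b := addr S h x k with hbdef
        have hy1 := hy (k + 1)
        have hz1 := hz (k + 1)
        have hinner : ∀ w : EuclideanSpace ℝ (Fin d), ⟪S.dir b, w⟫ = c * ⟪v i, w⟫ := by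
          intro w; rw [hc, real_inner_smul_left]
        by_cases hxc : h b < ⟪S.dir b, x⟫
        · -- bit = true : kept side is {⟪dir, ·⟫ > h b}
          have haddr1 : addr S h x (k + 1) = true :: b := by
            rw [addr_succ, ← hbdef, if_pos hxc]
          rw [haddr1] at hy1 hz1
          have hPy := ((mem_cell_true S h b y).1 hy1).2
          have hPz := ((mem_cell_true S h b z).1 hz1).2
          rw [hinner] at hPy hPz
          rcases hc0.lt_or_gt with hcneg | hcpos
          · -- c < 0 : upper bound cut, keeps A i q
            left
            intro w hw
            obtain ⟨hwA, hwcell⟩ := hw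
            rw [haddr1]
            refine (mem_cell_true S h b w).2 ⟨hwcell, ?_⟩
            rw [hinner]
            have h1 : c * (q : ℝ) ≤ c * ⟪v i, w⟫ := mul_le_mul_of_nonpos_left hwA hcneg.le
            have h2 : c * ⟪v i, z⟫ < c * (q : ℝ) := mul_lt_mul_of_neg_left hq2 hcneg
            linarith
          · -- c > 0 : lower bound cut, keeps B i q
            right
            intro w hw
            obtain ⟨hwB, hwcell⟩ := hw
            rw [haddr1]
            refine (mem_cell_true S h b w).2 ⟨hwcell, ?_⟩
            rw [hinner]
            have h1 : c * (q : ℝ) ≤ c * ⟪v i, w⟫ := (mul_le_mul_iff_right₀ hcpos).2 hwB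
            have h2 : c * ⟪v i, y⟫ < c * (q : ℝ) := (mul_lt_mul_iff_right₀ hcpos).2 hq1
            linarith
        · -- bit = false : kept side is {⟪dir, ·⟫ ≤ h b}
          have haddr1 : addr S h x (k + 1) = false :: b := by
            rw [addr_succ, ← hbdef, if_neg hxc]
          rw [haddr1] at hy1 hz1
          have hPy := ((mem_cell_false S h b y).1 hy1).2
          have hPz := ((mem_cell_false S h b z).1 hz1).2
          rw [hinner] at hPy hPz
          rcases hc0.lt_or_gt with hcneg | hcpos
          · -- c < 0 : lower bound cut, keeps B i q
            right
            intro w hw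
            obtain ⟨hwB, hwcell⟩ := hw
            rw [haddr1]
            refine (mem_cell_false S h b w).2 ⟨hwcell, ?_⟩
            rw [hinner]
            have h1 : c * ⟪v i, w⟫ ≤ c * (q : ℝ) := mul_le_mul_of_nonpos_left hwB hcneg.le
            have h2 : c * (q : ℝ) < c * ⟪v i, y⟫ := mul_lt_mul_of_neg_left hq1 hcneg
            linarith
          · -- c > 0 : upper bound cut, keeps A i q
            left
            intro w hw
            obtain ⟨hwA, hwcell⟩ := hw
            rw [haddr1]
            refine (mem_cell_false S h b w).2 ⟨hwcell, ?_⟩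
            rw [hinner]
            have h1 : c * ⟪v i, w⟫ ≤ c * (q : ℝ) := (mul_le_mul_iff_right₀ hcpos).2 hwA
            have h2 : c * (q : ℝ) < c * ⟪v i, z⟫ := (mul_lt_mul_iff_right₀ hcpos).2 hq2
            linarith
      -- the set of i-cut times is infinite
      have hicut : {k | ∃ c : ℝ, S.dir (addr S h x k) = c • v i}.Infinite := by
        set σ : ℕ → Bool :=
          fun k => if h (addr S h x k) < ⟪S.dir (addr S h x k), x⟫ then true else false
            with hσdef
        have hbr : ∀ k, branch σ k = addr S h x k := by
          intro k
          induction k with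
          | zero => rfl
          | succ k ih =>
            show σ k :: branch σ k = _
            rw [ih, addr_succ]
        have := hinf σ i
        have heq : {k : ℕ | ∃ c : ℝ, S.dir (branch σ k) = c • v i} =
            {k : ℕ | ∃ c : ℝ, S.dir (addr S h x k) = c • v i} := by
          ext k; rw [Set.mem_setOf_eq, Set.mem_setOf_eq, hbr k]
        rwa [heq] at this
      have hunion := hicut.mono hsplit
      rcases Set.infinite_union.1 hunion with hU | hL
      · -- infinitely many bisections keep A i q : the low point violates the null set
        have hxev : x ∈ keepEvent S h (A i q) := hU
        rcases hyor with rfl | rfl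
        · exact (hgx i q).1 ⟨hxev, le_of_lt hq1⟩
        · exact (hgu i q).1 ⟨(hkeep_eq (A i q)).2 hxev, le_of_lt hq1⟩
      · -- infinitely many bisections keep B i q : the high point violates the null set
        have hxev : x ∈ keepEvent S h (B i q) := hL
        rcases hzor with rfl | rfl
        · exact (hgx i q).2 ⟨hxev, le_of_lt hq2⟩
        · exact (hgu i q).2 ⟨(hkeep_eq (B i q)).2 hxev, le_of_lt hq2⟩
    rcases lt_or_gt_of_ne hne with hlt | hlt
    · exact key (u x) x hmemu hmemx (Or.inr rfl) (Or.inl rfl) hlt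
    · exact key x (u x) hmemx hmemu (Or.inl rfl) (Or.inr rfl) hlt
  -- conclude from the basis
  have hw : ∀ i : Fin d, ⟪v i, u x - x⟫ = 0 := fun i => by
    rw [inner_sub_right, hcoord i, sub_self]
  have hzero : u x - x = 0 := by
    have hself : ⟪u x - x, u x - x⟫ = 0 := by
      have hrepr := v.sum_repr (u x - x)
      calc ⟪u x - x, u x - x⟫ = ⟪∑ i, v.repr (u x - x) i • v i, u x - x⟫ := by rw [hrepr]
        _ = ∑ i, v.repr (u x - x) i * ⟪v i, u x - x⟫ := by
            rw [sum_inner]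
            exact Finset.sum_congr rfl fun i _ => by rw [real_inner_smul_left]
        _ = 0 := by simp [hw]
    exact inner_self_eq_zero.1 hself
  exact sub_eq_zero.1 hzero

/-! ### Translation equivariance -/

lemma mem_cell_add (θ : EuclideanSpace ℝ (Fin d)) (b : List Bool)
    (x : EuclideanSpace ℝ (Fin d)) :
    x ∈ cell S (fun b => h b + ⟪S.dir b, θ⟫) b ↔ x - θ ∈ cell S h b := by
  induction b with
  | nil => simp [cell]
  | cons i b ih =>
    cases i
    · rw [mem_cell_false, mem_cell_false, ih, inner_sub_right]
      constructor
      · rintro ⟨h1, h2⟩; exact ⟨h1, by linarith⟩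
      · rintro ⟨h1, h2⟩; exact ⟨h1, by linarith⟩
    · rw [mem_cell_true, mem_cell_true, ih, inner_sub_right]
      constructor
      · rintro ⟨h1, h2⟩; exact ⟨h1, by linarith⟩
      · rintro ⟨h1, h2⟩; exact ⟨h1, by linarith⟩

lemma cell_add_eq_image (θ : EuclideanSpace ℝ (Fin d)) (b : List Bool) :
    cell S (fun b => h b + ⟪S.dir b, θ⟫) b = (fun x => x + θ) '' cell S h b := by
  ext x
  rw [mem_cell_add]
  constructor
  · intro hx
    exact ⟨x - θ, hx, by simp⟩
  · rintro ⟨y, hy, rfl⟩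
    simpa using hy

lemma addr_add (θ : EuclideanSpace ℝ (Fin d)) (x : EuclideanSpace ℝ (Fin d)) (k : ℕ) :
    addr S (fun b => h b + ⟪S.dir b, θ⟫) x k = addr S h (x - θ) k := by
  induction k with
  | zero => rfl
  | succ k ih =>
    rw [addr_succ, addr_succ, ih]
    congr 1
    have hiff : (h (addr S h (x - θ) k) + ⟪S.dir (addr S h (x - θ) k), θ⟫ <
        ⟪S.dir (addr S h (x - θ) k), x⟫) ↔
        (h (addr S h (x - θ) k) < ⟪S.dir (addr S h (x - θ) k), x - θ⟫) := by
      rw [inner_sub_right]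
      constructor <;> intro <;> linarith
    by_cases hcc : h (addr S h (x - θ) k) < ⟪S.dir (addr S h (x - θ) k), x - θ⟫
    · rw [if_pos (hiff.2 hcc), if_pos hcc]
    · rw [if_neg (fun hcon => hcc (hiff.1 hcon)), if_neg hcc]

lemma ell_add (θ : EuclideanSpace ℝ (Fin d)) (x : EuclideanSpace ℝ (Fin d)) :
    ell S (fun b => h b + ⟪S.dir b, θ⟫) x = ell S h (x - θ) := by
  unfold ell
  exact iSup_congr fun k => by rw [addr_add]

lemma median_translate (μ : Measure (EuclideanSpace ℝ (Fin d)))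
    (hmed : IsMedianHeights S μ h) (θ : EuclideanSpace ℝ (Fin d)) :
    IsMedianHeights S (μ.map (· + θ)) (fun b => h b + ⟪S.dir b, θ⟫) := by
  have hpre : ∀ c : List Bool,
      (· + θ) ⁻¹' cell S (fun b => h b + ⟪S.dir b, θ⟫) c = cell S h c := by
    intro c
    ext x
    rw [Set.mem_preimage, mem_cell_add]
    simp
  intro b
  rw [Measure.map_apply (measurable_add_const θ) (measurableSet_cell S _ _),
    Measure.map_apply (measurable_add_const θ) (measurableSet_cell S _ _), hpre, hpre]
  exact hmed b

end NoColl

theorem no_collision_translation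
    (μ₀ : Measure (EuclideanSpace ℝ (Fin d))) (hK : MemK μ₀)
    (θ θ' : EuclideanSpace ℝ (Fin d))
    (S : Slicing d) (hS : GoodSchedule S)
    (h₀ : List Bool → ℝ) (hmed : IsMedianHeights S μ₀ h₀) :
    let μθ := μ₀.map (· + θ)
    let μθ' := μ₀.map (· + θ')
    let hθ : List Bool → ℝ := fun b => h₀ b + ⟪S.dir b, θ⟫
    let hθ' : List Bool → ℝ := fun b => h₀ b + ⟪S.dir b, θ'⟫
    IsMedianHeights S μθ hθ ∧
    (∀ b, cell S hθ b = (fun x => x + θ) '' cell S h₀ b) ∧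
    (∀ x, ell S hθ x = ell S h₀ (x - θ)) ∧
    (∀ t, IsNoCollisionMap S h₀ hθ μ₀ μθ t → t =ᵐ[μ₀] (· + θ)) ∧
    (∀ p : ℝ, 1 ≤ p → ∀ t, IsNoCollisionMap S hθ hθ' μθ μθ' t →
      (∫ x, ‖t x - x‖ ^ p ∂μθ) ^ (1 / p) = ‖θ - θ'‖) := by
  intro μθ μθ' hθ hθ'
  haveI hP0 : IsProbabilityMeasure μ₀ := hK.1
  haveI hPθ : IsProbabilityMeasure μθ :=
    Measure.isProbabilityMeasure_map (measurable_add_const θ).aemeasurable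
  have hmedθ : IsMedianHeights S μθ hθ := NoColl.median_translate S h₀ μ₀ hmed θ
  refine ⟨hmedθ, fun b => NoColl.cell_add_eq_image S h₀ θ b,
    fun x => NoColl.ell_add S h₀ θ x, ?_, ?_⟩
  · -- the no-collision map from μ₀ to μθ is the translation
    rintro t ⟨htm, htmap, htcell⟩
    have hmap : μ₀.map (fun x => t x - θ) = μ₀ := by
      have h1 : (fun x => t x - θ) = (· - θ) ∘ t := rfl
      rw [h1, ← Measure.map_map (measurable_sub_const θ) htm, htmap]
      show (μ₀.map (· + θ)).map (· - θ) = μ₀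
      rw [Measure.map_map (measurable_sub_const θ) (measurable_add_const θ)]
      have h2 : ((· - θ) ∘ (· + θ) : EuclideanSpace ℝ (Fin d) → EuclideanSpace ℝ (Fin d))
          = id := by funext z; simp
      rw [h2, Measure.map_id]
    have hcl : ∀ b, ∀ᵐ x ∂μ₀, x ∈ cell S h₀ b → t x - θ ∈ cell S h₀ b := by
      intro b
      filter_upwards [htcell b] with x hx hxb
      exact (NoColl.mem_cell_add S h₀ θ b (t x)).1 (hx hxb)
    have hid := NoColl.map_ae_id hS μ₀ hmed (fun x => t x - θ) (htm.sub_const θ) hmap hcl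
    filter_upwards [hid] with x hx
    exact sub_eq_iff_eq_add.1 hx
  · -- the slicing distance between translates
    rintro p hp t ⟨htm, htmap, htcell⟩
    set δ := θ' - θ with hδdef
    have hmapδ : μθ.map (· + δ) = μθ' := by
      show (μ₀.map (· + θ)).map (· + δ) = μ₀.map (· + θ')
      rw [Measure.map_map (measurable_add_const δ) (measurable_add_const θ)]
      congr 1
      funext z
      show z + θ + (θ' - θ) = z + θ'
      abel
    have hθ'eq : hθ' = fun b => hθ b + ⟪S.dir b, δ⟫ := by
      funext b
      show h₀ b + ⟪S.dir b, θ'⟫ = h₀ b + ⟪S.dir b, θ⟫ + ⟪S.dir b, θ' - θ⟫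
      rw [inner_sub_right]; ring
    have hmap : μθ.map (fun x => t x - δ) = μθ := by
      have h1 : (fun x => t x - δ) = (· - δ) ∘ t := rfl
      rw [h1, ← Measure.map_map (measurable_sub_const δ) htm, htmap, ← hmapδ,
        Measure.map_map (measurable_sub_const δ) (measurable_add_const δ)]
      have h2 : ((· - δ) ∘ (· + δ) : EuclideanSpace ℝ (Fin d) → EuclideanSpace ℝ (Fin d))
          = id := by funext z; simp
      rw [h2, Measure.map_id]
    have hcl : ∀ b, ∀ᵐ x ∂μθ, x ∈ cell S hθ b → t x - δ ∈ cell S hθ b := by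
      intro b
      filter_upwards [htcell b] with x hx hxb
      have h3 := hx hxb
      rw [hθ'eq] at h3
      exact (NoColl.mem_cell_add S hθ δ b (t x)).1 h3
    have hid := NoColl.map_ae_id hS μθ hmedθ (fun x => t x - δ) (htm.sub_const δ) hmap hcl
    have hae : ∀ᵐ x ∂μθ, ‖t x - x‖ ^ p = ‖θ - θ'‖ ^ p := by
      filter_upwards [hid] with x hx
      have h4 : t x = x + δ := sub_eq_iff_eq_add.1 hx
      rw [h4, show x + δ - x = δ from by abel, hδdef, norm_sub_rev]
    rw [integral_congr_ae hae, integral_const, measureReal_def, measure_univ, ENNReal.toReal_one, one_smul,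
      ← Real.rpow_mul (norm_nonneg _), mul_one_div, div_self (by linarith : p ≠ 0),
      Real.rpow_one]
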